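/- Let b ≥ 2 and let a be coprime to b. The set S_1 = {n^(a/b) : n ∈ ℕ, n is b-free} is linearly independent over ℚ as a subset of ℝ. -/

import Mathlib

def IsBFree (b n : ℕ) : Prop := ∀ k : ℕ, 1 < k → ¬ k ^ b ∣ n

open Polynomial

lemma trace_eq_zero_aux (K : IntermediateField ℚ ℝ) [FiniteDimensional ℚ K]
    (b : ℕ) (hb : b ≠ 0) (y : K) (hy : 0 < (y : ℝ)) (s : ℚ) (hs : (y : ℝ) ^ b = (s : ℝ))
    (hirr : ∀ q : ℚ, (y : ℝ) ≠ (q : ℝ)) : Algebra.trace ℚ K y = 0 := by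
  have halg : ∀ q : ℚ, (((algebraMap ℚ K) q : K) : ℝ) = (q : ℝ) := fun q => rfl
  have hyK : y ^ b = algebraMap ℚ K s := by
    apply Subtype.ext
    rw [halg]
    push_cast
    exact hs
  have haev : Polynomial.aeval y (X ^ b - C s) = 0 := by
    simp [hyK]
  have hint : IsIntegral ℚ y := ⟨X ^ b - C s, monic_X_pow_sub_C s hb, haev⟩
  set μ : ℚ[X] := minpoly ℚ y with hμdef
  set d : ℕ := μ.natDegree with hd
  have hd2 : 2 ≤ d := by
    refine (minpoly.two_le_natDegree_iff hint).2 ?_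
    rintro ⟨q, hq⟩
    exact hirr q (by rw [← hq]; exact (halg q).symm)
  have hd0 : d ≠ 0 := by omega
  have hdvd : μ ∣ X ^ b - C s := minpoly.dvd ℚ y haev
  -- work over ℂ
  set μC : ℂ[X] := μ.map (algebraMap ℚ ℂ) with hμC
  have hμmonic : μ.Monic := minpoly.monic hint
  have hsplit : μC.Splits :=
    IsAlgClosed.splits μC
  have hcard : Multiset.card μC.roots = d := by
    rw [splits_iff_card_roots.1 hsplit, hμC, natDegree_map]
  have habs : ∀ ρ ∈ μC.roots, ‖ρ‖ = (y : ℝ) := by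
    intro ρ hρ
    have hρ0 : μC.eval ρ = 0 := isRoot_of_mem_roots hρ
    have hdvdC : μC ∣ (X ^ b - C (s : ℂ)) := by
      have := Polynomial.map_dvd (algebraMap ℚ ℂ) hdvd
      simpa using this
    obtain ⟨u, hu⟩ := hdvdC
    have hρb : ρ ^ b = (s : ℂ) := by
      have h1 : (X ^ b - C (s : ℂ)).eval ρ = 0 := by
        rw [hu, eval_mul, hρ0, zero_mul]
      have h2 : ρ ^ b - (s : ℂ) = 0 := by simpa using h1
      exact sub_eq_zero.1 h2
    have hsC : ((s : ℚ) : ℂ) = (((s : ℚ) : ℝ) : ℂ) := by push_cast; ring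
    have habsb : ‖ρ‖ ^ b = (y : ℝ) ^ b := by
      rw [← norm_pow, hρb, hsC, Complex.norm_real, ← hs]
      exact abs_of_nonneg (by positivity)
    exact (pow_left_inj₀ (norm_nonneg ρ) hy.le hb).1 habsb
  -- the constant coefficient has absolute value y^d
  have hprod : μC.coeff 0 = (-1) ^ d * μC.roots.prod := by
    have := hsplit.coeff_zero_eq_prod_roots_of_monic (hμmonic.map (algebraMap ℚ ℂ))
    rw [this, hμC, natDegree_map]
  have habs0 : ((|μ.coeff 0| : ℚ) : ℝ) = (y : ℝ) ^ d := by
    have hmap : μC.roots.map (‖·‖) = Multiset.replicate d (y : ℝ) := by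
      rw [Multiset.eq_replicate]
      exact ⟨by rw [Multiset.card_map, hcard], fun x hx => by
        obtain ⟨ρ, hρ, rfl⟩ := Multiset.mem_map.1 hx
        exact habs ρ hρ⟩
    have h1 : ‖μC.coeff 0‖ = (y : ℝ) ^ d := by
      rw [hprod, norm_mul, norm_pow]
      have hneg : ‖(-1 : ℂ)‖ = 1 := by simp
      rw [hneg, one_pow, one_mul, show ‖μC.roots.prod‖ = (μC.roots.map (‖·‖)).prod from
        map_multiset_prod (normHom : ℂ →*₀ ℝ) _, hmap,
        Multiset.prod_replicate]
    have h2 : μC.coeff 0 = (((μ.coeff 0 : ℚ) : ℝ) : ℂ) := by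
      rw [hμC, coeff_map]
      push_cast
      exact eq_ratCast (algebraMap ℚ ℂ) _
    rw [h2, Complex.norm_real, Real.norm_eq_abs] at h1
    rw [← h1]
    push_cast
    ring
  set c : ℚ := |μ.coeff 0| with hc
  have hyd : y ^ d = algebraMap ℚ K c := by
    apply Subtype.ext
    rw [halg]
    push_cast
    exact habs0.symm
  -- μ = X^d - C c
  have haev2 : Polynomial.aeval y (X ^ d - C c) = 0 := by
    simp [hyd]
  have hμeq : μ = X ^ d - C c := by
    refine (eq_of_monic_of_dvd_of_natDegree_le hμmonic (monic_X_pow_sub_C c hd0)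
      (minpoly.dvd ℚ y haev2) ?_).symm
    rw [natDegree_X_pow_sub_C]
  have hnext : μ.nextCoeff = 0 := by
    have hXd : (X ^ d - C c : ℚ[X]).nextCoeff = 0 := by
      rw [Polynomial.nextCoeff, natDegree_X_pow_sub_C, if_neg hd0, coeff_sub, coeff_X_pow,
        if_neg (by omega : ¬ d - 1 = d), coeff_C, if_neg (by omega : ¬ d - 1 = 0)]
      ring
    rw [hμeq]
    exact hXd
  -- trace via sum of roots
  have htr := trace_eq_sum_roots (K := ℚ) (L := K) (F := ℂ) (x := y)
    (IsAlgClosed.splits _)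
  have hsum : (μ.aroots ℂ).sum = 0 := by
    have h3 := hsplit.nextCoeff_eq_neg_sum_roots_of_monic (hμmonic.map (algebraMap ℚ ℂ))
    have hnc : μC.nextCoeff = 0 := by
      rw [hμC, nextCoeff_map (algebraMap ℚ ℂ).injective, hnext, map_zero]
    rw [hnc] at h3
    have h4 : (μ.map (algebraMap ℚ ℂ)).roots.sum = 0 := neg_eq_zero.1 h3.symm
    rw [Polynomial.aroots_def]
    exact h4
  rw [← hμdef] at htr
  rw [hsum, smul_zero] at htr
  exact_mod_cast (map_eq_zero_iff (algebraMap ℚ ℂ) (algebraMap ℚ ℂ).injective).1 htr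


lemma bfree_factorization_lt {b n p : ℕ} (hb : 2 ≤ b) (hn : 0 < n) (hf : IsBFree b n)
    (hp : p.Prime) : n.factorization p < b := by
  by_contra h
  push_neg at h
  exact hf p hp.one_lt ((Nat.Prime.pow_dvd_iff_le_factorization hp hn.ne').2 h)

lemma bfree_ratio_eq {a b m n : ℕ} (ha : 0 < a) (hb : 2 ≤ b) (hab : Nat.gcd a b = 1)
    (hm : 0 < m) (hn : 0 < n) (hfm : IsBFree b m) (hfn : IsBFree b n) (q : ℚ)
    (hq : (m : ℝ) ^ ((a : ℝ) / b) / (n : ℝ) ^ ((a : ℝ) / b) = (q : ℝ)) : m = n := by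
  have hb0 : (b : ℝ) ≠ 0 := by positivity
  have hxpow : ∀ k : ℕ, ((k : ℝ) ^ ((a : ℝ) / b)) ^ b = (k : ℝ) ^ a := by
    intro k
    rw [← Real.rpow_natCast ((k : ℝ) ^ ((a : ℝ) / b)) b, ← Real.rpow_mul (Nat.cast_nonneg k),
      div_mul_cancel₀ _ hb0, Real.rpow_natCast]
  have hmpos : (0 : ℝ) < (m : ℝ) ^ ((a : ℝ) / b) := Real.rpow_pos_of_pos (by exact_mod_cast hm) _
  have hnpos : (0 : ℝ) < (n : ℝ) ^ ((a : ℝ) / b) := Real.rpow_pos_of_pos (by exact_mod_cast hn) _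
  have hqpos : (0 : ℝ) < (q : ℝ) := hq ▸ div_pos hmpos hnpos
  have hq0 : 0 < q := by exact_mod_cast hqpos
  have hreal : (m : ℝ) ^ a = (q : ℝ) ^ b * (n : ℝ) ^ a := by
    have h1 : (m : ℝ) ^ ((a : ℝ) / b) = (q : ℝ) * (n : ℝ) ^ ((a : ℝ) / b) :=
      (div_eq_iff hnpos.ne').1 hq
    calc (m : ℝ) ^ a = ((m : ℝ) ^ ((a : ℝ) / b)) ^ b := (hxpow m).symm
      _ = ((q : ℝ) * (n : ℝ) ^ ((a : ℝ) / b)) ^ b := by rw [h1]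
      _ = (q : ℝ) ^ b * ((n : ℝ) ^ ((a : ℝ) / b)) ^ b := mul_pow _ _ _
      _ = (q : ℝ) ^ b * (n : ℝ) ^ a := by rw [hxpow n]
  have hrat : (m : ℚ) ^ a = q ^ b * (n : ℚ) ^ a := by exact_mod_cast hreal
  -- clear denominators
  set u : ℕ := q.num.toNat with hu
  have hnum : (q.num : ℚ) = (u : ℚ) := by
    have : (0 : ℤ) ≤ q.num := Rat.num_nonneg.2 hq0.le
    rw [hu]
    exact_mod_cast (Int.toNat_of_nonneg this).symm
  have hden : ((q.den : ℚ)) ≠ 0 := by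
    exact_mod_cast q.den_nz
  have hqd : q * (q.den : ℚ) = (u : ℚ) := by
    rw [← hnum]
    exact_mod_cast Rat.mul_den_eq_num q
  have hQ : (m : ℚ) ^ a * (q.den : ℚ) ^ b = (u : ℚ) ^ b * (n : ℚ) ^ a := by
    calc (m : ℚ) ^ a * (q.den : ℚ) ^ b = q ^ b * (n : ℚ) ^ a * (q.den : ℚ) ^ b := by rw [hrat]
      _ = (q * q.den) ^ b * (n : ℚ) ^ a := by ring
      _ = (u : ℚ) ^ b * (n : ℚ) ^ a := by rw [hqd]
  have hN : m ^ a * q.den ^ b = u ^ b * n ^ a := by exact_mod_cast hQ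
  have hu0 : u ≠ 0 := by
    intro h
    rw [h, zero_pow (by omega : b ≠ 0), zero_mul] at hN
    have hne : m ^ a * q.den ^ b ≠ 0 := by positivity
    exact hne hN
  -- compare factorizations
  have key : m.factorization = n.factorization := by
    ext p
    by_cases hp : p.Prime
    · have h1 := congrArg (fun f => f p) (congrArg Nat.factorization hN)
      simp only [Nat.factorization_mul (pow_ne_zero a hm.ne') (pow_ne_zero b q.den_nz),
        Nat.factorization_mul (pow_ne_zero b hu0) (pow_ne_zero a hn.ne'),
        Nat.factorization_pow, Finsupp.coe_add, Finsupp.coe_smul, Pi.add_apply,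
        Pi.smul_apply, smul_eq_mul] at h1
      set vm := m.factorization p with hvmdef
      set vn := n.factorization p with hvndef
      set vd := q.den.factorization p with hvddef
      set vu := u.factorization p with hvudef
      have hvm : vm < b := bfree_factorization_lt hb hm hfm hp
      have hvn : vn < b := bfree_factorization_lt hb hn hfn hp
      have hdvdZ : (b : ℤ) ∣ (a : ℤ) * ((vm : ℤ) - (vn : ℤ)) := by
        refine ⟨(vu : ℤ) - (vd : ℤ), ?_⟩
        push_cast
        have h1' : (a : ℤ) * vm + b * vd = b * vu + a * vn := by exact_mod_cast h1
        ring_nf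
        ring_nf at h1'
        linarith
      have hcop : IsCoprime (b : ℤ) (a : ℤ) := by
        rw [Int.isCoprime_iff_gcd_eq_one, Int.gcd_natCast_natCast, Nat.gcd_comm]
        exact hab
      obtain ⟨t, ht⟩ := hcop.dvd_of_dvd_mul_left hdvdZ
      have habs1 : |(vm : ℤ) - (vn : ℤ)| < (b : ℤ) := by
        rw [abs_lt]
        constructor <;> [push_cast; push_cast] <;> omega
      have habs2 : |(vm : ℤ) - (vn : ℤ)| = (b : ℤ) * |t| := by
        rw [ht, abs_mul, abs_of_nonneg (by positivity : (0 : ℤ) ≤ (b : ℤ))]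
      have hbZ : (0 : ℤ) < (b : ℤ) := by exact_mod_cast (by omega : 0 < b)
      have ht0 : t = 0 := by
        by_contra h
        have h1t : (1 : ℤ) ≤ |t| := Int.one_le_abs (by simpa using h)
        nlinarith
      rw [ht0, mul_zero] at ht
      omega
    · rw [Nat.factorization_eq_zero_of_not_prime m hp,
        Nat.factorization_eq_zero_of_not_prime n hp]
  exact Nat.factorization_inj (Set.mem_setOf_eq ▸ hm.ne') (Set.mem_setOf_eq ▸ hn.ne') key

theorem stmt5 (a b : ℕ) (ha : 0 < a) (hb : 2 ≤ b) (hab : Nat.gcd a b = 1) :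
    LinearIndependent ℚ
      (fun s : {x : ℝ | ∃ n : ℕ, 0 < n ∧ IsBFree b n ∧ x = (n : ℝ) ^ ((a : ℝ) / b)} =>
        (s : ℝ)) := by
  set S := {x : ℝ | ∃ n : ℕ, 0 < n ∧ IsBFree b n ∧ x = (n : ℝ) ^ ((a : ℝ) / b)} with hS
  rw [linearIndependent_iff']
  intro s g hrel τ hτ
  have hspec : ∀ σ : S, ∃ n : ℕ, 0 < n ∧ IsBFree b n ∧ (σ : ℝ) = (n : ℝ) ^ ((a : ℝ) / b) :=
    fun σ => σ.2
  choose nn h1 h2 h3 using hspec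
  have hpos : ∀ σ : S, (0 : ℝ) < (σ : ℝ) := fun σ => by
    rw [h3]; exact Real.rpow_pos_of_pos (by exact_mod_cast h1 σ) _
  -- normalized elements
  set z : S → ℝ := fun σ => (σ : ℝ) / (τ : ℝ) with hz
  have hzpos : ∀ σ, 0 < z σ := fun σ => div_pos (hpos σ) (hpos τ)
  have hb0 : (b : ℝ) ≠ 0 := by positivity
  have hxpow : ∀ k : ℕ, ((k : ℝ) ^ ((a : ℝ) / b)) ^ b = (k : ℝ) ^ a := by
    intro k
    rw [← Real.rpow_natCast ((k : ℝ) ^ ((a : ℝ) / b)) b, ← Real.rpow_mul (Nat.cast_nonneg k),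
      div_mul_cancel₀ _ hb0, Real.rpow_natCast]
  set qv : S → ℚ := fun σ => ((nn σ : ℚ) ^ a) / ((nn τ : ℚ) ^ a) with hqv
  have hzb : ∀ σ, (z σ) ^ b = ((qv σ : ℚ) : ℝ) := by
    intro σ
    rw [hz]
    push_cast [hqv]
    rw [div_pow, h3 σ, h3 τ, hxpow, hxpow]
  have hint : ∀ σ : S, IsIntegral ℚ (z σ) := by
    intro σ
    refine ⟨X ^ b - C (qv σ), monic_X_pow_sub_C _ (by omega), ?_⟩
    show (Polynomial.aeval (z σ)) (X ^ b - C (qv σ)) = 0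
    rw [map_sub, map_pow, aeval_X, aeval_C]
    rw [show (algebraMap ℚ ℝ) (qv σ) = ((qv σ : ℚ) : ℝ) from eq_ratCast _ _, ← hzb σ]
    ring
  -- the field
  set K : IntermediateField ℚ ℝ := IntermediateField.adjoin ℚ (↑(Finset.image z s) : Set ℝ)
    with hK
  have hfd : FiniteDimensional ℚ K := by
    apply IntermediateField.finiteDimensional_adjoin
    intro x hx
    simp only [Finset.coe_image, Set.mem_image, Finset.mem_coe] at hx
    obtain ⟨σ, _, rfl⟩ := hx
    exact hint σ
  have hmem : ∀ σ ∈ s, z σ ∈ K := by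
    intro σ hσ
    apply IntermediateField.subset_adjoin
    simp only [Finset.coe_image, Set.mem_image, Finset.mem_coe]
    exact ⟨σ, hσ, rfl⟩
  classical
  set w : S → K := fun σ => if h : z σ ∈ K then (⟨z σ, h⟩ : K) else 0 with hw
  have hwval : ∀ σ ∈ s, ((w σ : K) : ℝ) = z σ := by
    intro σ hσ
    rw [hw]
    simp [dif_pos (hmem σ hσ)]
  -- lift the relation to K
  have hrel2 : ∑ σ ∈ s, g σ • z σ = 0 := by
    rw [hz]
    have : ∑ σ ∈ s, g σ • ((σ : ℝ) / (τ : ℝ)) = (∑ σ ∈ s, g σ • (σ : ℝ)) / (τ : ℝ) := by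
      rw [Finset.sum_div]
      congr 1
      ext σ
      rw [smul_div_assoc]
    rw [this, hrel, zero_div]
  have hKrel : ∑ σ ∈ s, g σ • w σ = 0 := by
    have hinj : Function.Injective (K.val.toLinearMap : K →ₗ[ℚ] ℝ) := fun x y h =>
      Subtype.ext (by exact h)
    apply hinj
    rw [map_sum, map_zero]
    rw [← hrel2]
    apply Finset.sum_congr rfl
    intro σ hσ
    rw [map_smul]
    congr 1
    exact hwval σ hσ
  -- apply the trace
  have htr := congrArg (Algebra.trace ℚ K) hKrel
  rw [map_sum, map_zero] at htr
  simp_rw [map_smul] at htr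
  have hτval : w τ = 1 := by
    apply Subtype.ext
    rw [show ((1 : K) : ℝ) = (1 : ℝ) from rfl, hwval τ hτ, hz]
    exact div_self (hpos τ).ne'
  have hzero : ∀ σ ∈ s, σ ≠ τ → Algebra.trace ℚ K (w σ) = 0 := by
    intro σ hσ hne
    apply trace_eq_zero_aux K b (by omega) (w σ)
    · rw [hwval σ hσ]; exact hzpos σ
    · show ((w σ : K) : ℝ) ^ b = ((qv σ : ℚ) : ℝ)
      rw [hwval σ hσ]; exact hzb σ
    · intro q hq
      rw [hwval σ hσ] at hq
      have : nn σ = nn τ := by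
        refine bfree_ratio_eq ha hb hab (h1 σ) (h1 τ) (h2 σ) (h2 τ) q ?_
        rw [← h3 σ, ← h3 τ]
        exact hq
      apply hne
      apply Subtype.ext
      rw [h3 σ, h3 τ, this]
  have hsingle : ∑ σ ∈ s, g σ • Algebra.trace ℚ K (w σ) = g τ • Algebra.trace ℚ K (w τ) := by
    apply Finset.sum_eq_single_of_mem τ hτ
    intro σ hσ hne
    rw [hzero σ hσ hne, smul_zero]
  rw [hsingle, hτval] at htr
  have htr1 : Algebra.trace ℚ K 1 = (Module.finrank ℚ K : ℚ) := by
    have h5 := Algebra.trace_algebraMap (R := ℚ) (S := K) 1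
    rw [map_one] at h5
    rw [h5, nsmul_eq_mul, mul_one]
  rw [htr1, smul_eq_mul] at htr
  have hfr : (Module.finrank ℚ K : ℚ) ≠ 0 := by
    have : 0 < Module.finrank ℚ K := Module.finrank_pos
    exact_mod_cast this.ne'
  exact (mul_eq_zero.1 htr).resolve_right hfr
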